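/- Let s ∈ ℝ be a transcendental number. If A ⊆ ℝ² is a set whose distance set satisfies Δ(A) ⊆ {n + s : n ∈ ℕ}, then A has at most 3 elements. -/

import Mathlib

open Polynomial in
/-- The `2 × ` Gram-determinant polynomial for four points with shifted-integer distances. -/
noncomputable def shiftGramPoly (n1 n2 n3 m12 m13 m23 : ℕ) : Polynomial ℚ :=
  (2*(C (n1:ℚ) + X)^2)*((2*(C (n2:ℚ) + X)^2)*(2*(C (n3:ℚ) + X)^2)
      - ((C (n2:ℚ) + X)^2 + (C (n3:ℚ) + X)^2 - (C (m23:ℚ) + X)^2)^2)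
    - ((C (n1:ℚ) + X)^2 + (C (n2:ℚ) + X)^2 - (C (m12:ℚ) + X)^2)
        * (((C (n1:ℚ) + X)^2 + (C (n2:ℚ) + X)^2 - (C (m12:ℚ) + X)^2)*(2*(C (n3:ℚ) + X)^2)
          - ((C (n2:ℚ) + X)^2 + (C (n3:ℚ) + X)^2 - (C (m23:ℚ) + X)^2)
              * ((C (n1:ℚ) + X)^2 + (C (n3:ℚ) + X)^2 - (C (m13:ℚ) + X)^2))
    + ((C (n1:ℚ) + X)^2 + (C (n3:ℚ) + X)^2 - (C (m13:ℚ) + X)^2)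
        * (((C (n1:ℚ) + X)^2 + (C (n2:ℚ) + X)^2 - (C (m12:ℚ) + X)^2)
              * ((C (n2:ℚ) + X)^2 + (C (n3:ℚ) + X)^2 - (C (m23:ℚ) + X)^2)
          - (2*(C (n2:ℚ) + X)^2)*((C (n1:ℚ) + X)^2 + (C (n3:ℚ) + X)^2 - (C (m13:ℚ) + X)^2))

lemma shiftGramPoly_coeff_six (n1 n2 n3 m12 m13 m23 : ℕ) :
    (shiftGramPoly n1 n2 n3 m12 m13 m23).coeff 6 = 4 := by
  unfold shiftGramPoly
  compute_degree!

lemma shiftGramPoly_ne_zero (n1 n2 n3 m12 m13 m23 : ℕ) :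
    shiftGramPoly n1 n2 n3 m12 m13 m23 ≠ 0 := by
  intro h
  have := shiftGramPoly_coeff_six n1 n2 n3 m12 m13 m23
  rw [h] at this
  norm_num at this

lemma euclidean_dist_sq (a b : EuclideanSpace ℝ (Fin 2)) :
    dist a b ^ 2 = (a 0 - b 0)^2 + (a 1 - b 1)^2 := by
  rw [EuclideanSpace.dist_eq, Real.sq_sqrt (by positivity)]
  simp [Fin.sum_univ_two, Real.dist_eq, sq_abs]

/-- No four distinct points can have all pairwise distances of the form `n + s`. -/
lemma no_four_points (s : ℝ) (hs : Transcendental ℚ s)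
    (p1 p2 p3 p4 : EuclideanSpace ℝ (Fin 2))
    (n12 n13 n14 n23 n24 n34 : ℕ)
    (h12 : dist p1 p2 = (n12 : ℝ) + s) (h13 : dist p1 p3 = (n13 : ℝ) + s)
    (h14 : dist p1 p4 = (n14 : ℝ) + s) (h23 : dist p2 p3 = (n23 : ℝ) + s)
    (h24 : dist p2 p4 = (n24 : ℝ) + s) (h34 : dist p3 p4 = (n34 : ℝ) + s) : False := by
  -- the (doubled) Gram determinant of `p1 - p4, p2 - p4, p3 - p4` vanishes
  have hgeom :
      (2*(dist p1 p4 ^ 2))*((2*(dist p2 p4 ^ 2))*(2*(dist p3 p4 ^ 2))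
          - (dist p2 p4 ^ 2 + dist p3 p4 ^ 2 - dist p2 p3 ^ 2)^2)
        - (dist p1 p4 ^ 2 + dist p2 p4 ^ 2 - dist p1 p2 ^ 2)
            * ((dist p1 p4 ^ 2 + dist p2 p4 ^ 2 - dist p1 p2 ^ 2)*(2*(dist p3 p4 ^ 2))
              - (dist p2 p4 ^ 2 + dist p3 p4 ^ 2 - dist p2 p3 ^ 2)
                  * (dist p1 p4 ^ 2 + dist p3 p4 ^ 2 - dist p1 p3 ^ 2))
        + (dist p1 p4 ^ 2 + dist p3 p4 ^ 2 - dist p1 p3 ^ 2)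
            * ((dist p1 p4 ^ 2 + dist p2 p4 ^ 2 - dist p1 p2 ^ 2)
                  * (dist p2 p4 ^ 2 + dist p3 p4 ^ 2 - dist p2 p3 ^ 2)
              - (2*(dist p2 p4 ^ 2))*(dist p1 p4 ^ 2 + dist p3 p4 ^ 2 - dist p1 p3 ^ 2)) = 0 := by
    simp only [euclidean_dist_sq]
    ring
  rw [h12, h13, h14, h23, h24, h34] at hgeom
  refine hs ⟨shiftGramPoly n14 n24 n34 n12 n13 n23,
    shiftGramPoly_ne_zero n14 n24 n34 n12 n13 n23, ?_⟩
  unfold shiftGramPoly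
  simp only [map_add, map_sub, map_mul, map_pow, map_ofNat, Polynomial.aeval_X,
    Polynomial.aeval_C, map_natCast]
  linear_combination hgeom

lemma four_distinct_of_ncard {α : Type*} {t : Set α} (ht : t.Finite) (h4 : t.ncard = 4) :
    ∃ a b c d, a ∈ t ∧ b ∈ t ∧ c ∈ t ∧ d ∈ t ∧
      a ≠ b ∧ a ≠ c ∧ a ≠ d ∧ b ≠ c ∧ b ≠ d ∧ c ≠ d := by
  obtain ⟨a, ha⟩ : t.Nonempty := by
    rw [← Set.ncard_pos ht]; omega
  have h3 : (t \ {a}).ncard = 3 := by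
    rw [Set.ncard_diff_singleton_of_mem ha, h4]
  obtain ⟨x, y, z, hxy, hxz, hyz, hset⟩ := Set.ncard_eq_three.mp h3
  have hx : x ∈ t \ {a} := by rw [hset]; simp
  have hy : y ∈ t \ {a} := by rw [hset]; simp
  have hz : z ∈ t \ {a} := by rw [hset]; simp
  exact ⟨a, x, y, z, ha, hx.1, hy.1, hz.1,
    fun h => hx.2 h.symm, fun h => hy.2 h.symm, fun h => hz.2 h.symm, hxy, hxz, hyz⟩

/-- **Shifted Erdős–Solymosi theorem, transcendental shift.**
If `s` is transcendental over `ℚ` and all pairwise distances between distinct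
points of `A ⊆ ℝ²` lie in `{n + s : n ∈ ℕ}`, then `A` has at most 3 elements. -/
theorem distance_set_shift_transcendental (s : ℝ) (hs : Transcendental ℚ s)
    (A : Set (EuclideanSpace ℝ (Fin 2)))
    (hA : ∀ a ∈ A, ∀ a' ∈ A, a ≠ a' → ∃ n : ℕ, dist a a' = (n : ℝ) + s) :
    A.Finite ∧ A.ncard ≤ 3 := by
  by_contra hcon
  obtain ⟨t, htA, htfin, htc⟩ : ∃ t, t ⊆ A ∧ t.Finite ∧ t.ncard = 4 := by
    rcases A.finite_or_infinite with hf | hinf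
    · have h4 : 4 ≤ A.ncard := by
        by_contra h
        exact hcon ⟨hf, by omega⟩
      obtain ⟨t, hts, htc⟩ := Set.exists_subset_card_eq h4
      exact ⟨t, hts, hf.subset hts, htc⟩
    · exact hinf.exists_subset_ncard_eq 4
  obtain ⟨p1, p2, p3, p4, hp1, hp2, hp3, hp4, h12, h13, h14, h23, h24, h34⟩ :=
    four_distinct_of_ncard htfin htc
  have m1 := htA hp1; have m2 := htA hp2; have m3 := htA hp3; have m4 := htA hp4
  obtain ⟨n12, d12⟩ := hA p1 m1 p2 m2 h12
  obtain ⟨n13, d13⟩ := hA p1 m1 p3 m3 h13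
  obtain ⟨n14, d14⟩ := hA p1 m1 p4 m4 h14
  obtain ⟨n23, d23⟩ := hA p2 m2 p3 m3 h23
  obtain ⟨n24, d24⟩ := hA p2 m2 p4 m4 h24
  obtain ⟨n34, d34⟩ := hA p3 m3 p4 m4 h34
  exact no_four_points s hs p1 p2 p3 p4 n12 n13 n14 n23 n24 n34 d12 d13 d14 d23 d24 d34
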